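/- Let d ≥ 3 and let G = S_{d−1}×S_1 be the subgroup of S_d of permutations fixing the index d. Then each of the intersections 𝔻_{d,2} ∩ M(d,d)^G, 𝕊_{d,2} ∩ M(d,d)^G, and 𝔸_{d,1} ∩ M(d,d)^G is one-dimensional: the first consists of the multiples of diag(−1, …, −1, d−1); the second consists of the multiples of the symmetric matrix whose (i,j)-entry is −2/(d−2) for distinct i, j ≤ d−1, whose (i,d)- and (d,i)-entries are 1 for i ≤ d−1, and whose diagonal is zero; the third consists of the multiples of the skew-symmetric matrix whose (i,d)-entry is −1 and (d,i)-entry is 1 for i ≤ d−1 and all other entries zero. Consequently V_s ∩ M(d,d)^G is three-dimensional, where V_s = 𝔻_{d,2} + 𝕊_{d,2} + 𝔸_{d,1}. -/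

import Mathlib

open Matrix

/-- The permutation matrix of `σ`. -/
def permMat {d : ℕ} (σ : Equiv.Perm (Fin d)) : Matrix (Fin d) (Fin d) ℝ :=
  Matrix.of fun i j => if σ j = i then (1 : ℝ) else 0

/-- The fixed-point space of a set `G` of permutations for the diagonal action
`W ↦ P_σ W P_σᵀ` on `d × d` matrices. -/
def fixedSpace {d : ℕ} (G : Set (Equiv.Perm (Fin d))) :
    Submodule ℝ (Matrix (Fin d) (Fin d) ℝ) where
  carrier := {W | ∀ σ ∈ G, permMat σ * W * (permMat σ)ᵀ = W}
  zero_mem' := by intro σ _; simp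
  add_mem' := by
    intro a b ha hb σ hσ
    rw [Matrix.mul_add, Matrix.add_mul, ha σ hσ, hb σ hσ]
  smul_mem' := by
    intro c a ha σ hσ
    rw [Matrix.mul_smul, Matrix.smul_mul, ha σ hσ]

/-- `𝔻_{d,2}`: trace-zero diagonal matrices. -/
def Dd2 (d : ℕ) : Submodule ℝ (Matrix (Fin d) (Fin d) ℝ) where
  carrier := {A | (∀ i j, i ≠ j → A i j = 0) ∧ ∑ i, A i i = 0}
  zero_mem' := ⟨fun i j _ => rfl, by simp⟩
  add_mem' := by
    rintro a b ⟨ha1, ha2⟩ ⟨hb1, hb2⟩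
    refine ⟨fun i j hij => ?_, ?_⟩
    · simp [Matrix.add_apply, ha1 i j hij, hb1 i j hij]
    · simp [Matrix.add_apply, Finset.sum_add_distrib, ha2, hb2]
  smul_mem' := by
    rintro c a ⟨ha1, ha2⟩
    refine ⟨fun i j hij => ?_, ?_⟩
    · simp [Matrix.smul_apply, ha1 i j hij]
    · simp [Matrix.smul_apply, ← Finset.mul_sum, ha2]

/-- `𝕊_{d,2}`: symmetric, zero diagonal, off-diagonal entries `x i + x j`, `∑ x = 0`. -/
def Sd2 (d : ℕ) : Submodule ℝ (Matrix (Fin d) (Fin d) ℝ) where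
  carrier := {A | ∃ x : Fin d → ℝ, (∑ i, x i = 0) ∧ (∀ i, A i i = 0) ∧
    ∀ i j, i ≠ j → A i j = x i + x j}
  zero_mem' := ⟨0, by simp, fun i => rfl, fun i j _ => by simp⟩
  add_mem' := by
    rintro a b ⟨x, hx0, hxd, hx⟩ ⟨y, hy0, hyd, hy⟩
    refine ⟨x + y, by simp [Finset.sum_add_distrib, hx0, hy0], fun i => ?_,
      fun i j hij => ?_⟩
    · simp [Matrix.add_apply, hxd i, hyd i]
    · simp [Matrix.add_apply, hx i j hij, hy i j hij]; ring
  smul_mem' := by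
    rintro c a ⟨x, hx0, hxd, hx⟩
    refine ⟨c • x, by simp [← Finset.mul_sum, hx0], fun i => ?_, fun i j hij => ?_⟩
    · simp [Matrix.smul_apply, hxd i]
    · simp [Matrix.smul_apply, hx i j hij]; ring

/-- `𝔸_{d,1}`: matrices with `A i j = x i − x j` for some `x ∈ ℝᵈ`. -/
def Ad1 (d : ℕ) : Submodule ℝ (Matrix (Fin d) (Fin d) ℝ) where
  carrier := {A | ∃ x : Fin d → ℝ, ∀ i j, A i j = x i - x j}
  zero_mem' := ⟨0, by simp⟩
  add_mem' := by
    rintro a b ⟨x, hx⟩ ⟨y, hy⟩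
    refine ⟨x + y, fun i j => ?_⟩
    simp [Matrix.add_apply, hx, hy]; ring
  smul_mem' := by
    rintro c a ⟨x, hx⟩
    refine ⟨c • x, fun i j => ?_⟩
    simp [Matrix.smul_apply, hx]; ring

namespace StabAux

variable {d : ℕ}

lemma mem_fixedSpace_iff {G : Set (Equiv.Perm (Fin d))} {W : Matrix (Fin d) (Fin d) ℝ} :
    W ∈ fixedSpace G ↔ ∀ σ ∈ G, permMat σ * W * (permMat σ)ᵀ = W := Iff.rfl

lemma conj_apply (σ : Equiv.Perm (Fin d)) (W : Matrix (Fin d) (Fin d) ℝ) (i j : Fin d) :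
    (permMat σ * W * (permMat σ)ᵀ) i j = W (σ⁻¹ i) (σ⁻¹ j) := by
  simp only [Matrix.mul_apply, Matrix.transpose_apply, permMat, Matrix.of_apply,
    ite_mul, one_mul, zero_mul, mul_ite, mul_one, mul_zero,
    Equiv.apply_eq_iff_eq_symm_apply]
  simp [Finset.sum_ite_eq']

lemma fixed_iff {G : Set (Equiv.Perm (Fin d))} {W : Matrix (Fin d) (Fin d) ℝ} :
    W ∈ fixedSpace G ↔ ∀ σ ∈ G, ∀ i j, W (σ⁻¹ i) (σ⁻¹ j) = W i j := by
  rw [mem_fixedSpace_iff]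
  refine forall₂_congr fun σ hσ => ?_
  constructor
  · intro h i j
    conv_rhs => rw [← h]
    exact (conj_apply σ W i j).symm
  · intro h
    ext i j
    rw [conj_apply, h]

lemma pattern_mem_fixed (e : Fin d) (W : Matrix (Fin d) (Fin d) ℝ)
    (h : ∀ i j i' j' : Fin d, (i = e ↔ i' = e) → (j = e ↔ j' = e) → (i = j ↔ i' = j') →
      W i j = W i' j') :
    W ∈ fixedSpace {σ : Equiv.Perm (Fin d) | σ e = e} := by
  rw [fixed_iff]
  intro σ hσ i j
  have he : σ⁻¹ e = e := by
    rw [Equiv.Perm.inv_eq_iff_eq]; exact hσ.symm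
  refine h _ _ i j ?_ ?_ ?_
  · constructor
    · intro hh; rw [← he] at hh; exact σ⁻¹.injective hh
    · intro hh; rw [hh, he]
  · constructor
    · intro hh; rw [← he] at hh; exact σ⁻¹.injective hh
    · intro hh; rw [hh, he]
  · exact ⟨fun hh => σ⁻¹.injective hh, fun hh => by rw [hh]⟩

lemma fixed_eq (e : Fin d) {W : Matrix (Fin d) (Fin d) ℝ}
    (hW : W ∈ fixedSpace {σ : Equiv.Perm (Fin d) | σ e = e}) {a b : Fin d}
    (ha : a ≠ e) (hb : b ≠ e) :
    W a e = W b e ∧ W e a = W e b ∧ W a a = W b b := by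
  have hσ : Equiv.swap a b ∈ {σ : Equiv.Perm (Fin d) | σ e = e} :=
    Equiv.swap_apply_of_ne_of_ne (Ne.symm ha) (Ne.symm hb)
  have key := fixed_iff.mp hW _ hσ
  rw [Equiv.swap_inv] at key
  have h1 := key a e
  have h2 := key e a
  have h3 := key a a
  simp only [Equiv.swap_apply_left, Equiv.swap_apply_of_ne_of_ne (Ne.symm ha) (Ne.symm hb)] at h1 h2 h3
  exact ⟨h1.symm, h2.symm, h3.symm⟩

end StabAux
namespace StabAux

variable {d : ℕ}

lemma nontriv (hd : 3 ≤ d) : Nontrivial (Fin d) :=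
  ⟨⟨⟨0, by omega⟩, ⟨1, by omega⟩, by simp [Fin.ext_iff]⟩⟩

lemma castd (hd : 3 ≤ d) : ((d - 1 : ℕ) : ℝ) = (d : ℝ) - 1 := by
  rw [Nat.cast_sub (by omega)]; simp

lemma M1_mem (hd : 3 ≤ d) (e : Fin d) :
    (Matrix.diagonal fun i : Fin d => if i = e then (d : ℝ) - 1 else -1) ∈ Dd2 d := by
  constructor
  · intro i j hij
    exact Matrix.diagonal_apply_ne _ hij
  · have h1 : ∀ i, (Matrix.diagonal fun i : Fin d => if i = e then (d : ℝ) - 1 else -1) i i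
        = if i = e then (d : ℝ) - 1 else -1 := fun i => Matrix.diagonal_apply_eq _ i
    simp only [h1]
    rw [← Finset.add_sum_erase _ _ (Finset.mem_univ e), if_pos rfl]
    rw [Finset.sum_congr rfl (fun k hk => if_neg (Finset.ne_of_mem_erase hk)),
      Finset.sum_const, Finset.card_erase_of_mem (Finset.mem_univ e),
      Finset.card_univ, Fintype.card_fin, nsmul_eq_mul, castd hd]
    ring

lemma M1_fixed (e : Fin d) :
    (Matrix.diagonal fun i : Fin d => if i = e then (d : ℝ) - 1 else -1) ∈
      fixedSpace {σ : Equiv.Perm (Fin d) | σ e = e} := by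
  apply pattern_mem_fixed
  intro i j i' j' h1 h2 h3
  simp only [Matrix.diagonal_apply, h1, h3]

lemma part1 (hd : 3 ≤ d) (e : Fin d) :
    Dd2 d ⊓ fixedSpace {σ : Equiv.Perm (Fin d) | σ e = e} =
      Submodule.span ℝ {Matrix.diagonal fun i : Fin d => if i = e then (d : ℝ) - 1 else -1} := by
  apply le_antisymm
  · rintro W ⟨⟨hdg, htr⟩, hF⟩
    haveI := nontriv hd
    obtain ⟨z, hz⟩ := exists_ne e
    have key := fun i (hi : i ≠ e) => fixed_eq e hF hi hz
    rw [Submodule.mem_span_singleton]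
    refine ⟨-(W z z), ?_⟩
    ext i j
    rw [Matrix.smul_apply, smul_eq_mul]
    by_cases hij : i = j
    · subst hij
      by_cases hie : i = e
      · subst hie
        rw [Matrix.diagonal_apply_eq, if_pos rfl]
        rw [← Finset.add_sum_erase _ _ (Finset.mem_univ i)] at htr
        rw [Finset.sum_congr rfl
            (fun k hk => (key k (Finset.ne_of_mem_erase hk)).2.2),
          Finset.sum_const, Finset.card_erase_of_mem (Finset.mem_univ i),
          Finset.card_univ, Fintype.card_fin, nsmul_eq_mul, castd hd] at htr
        linarith
      · rw [Matrix.diagonal_apply_eq, if_neg hie]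
        have := (key i hie).2.2
        linarith
    · rw [Matrix.diagonal_apply_ne _ hij, hdg i j hij]
      ring
  · rw [Submodule.span_le, Set.singleton_subset_iff]
    exact ⟨M1_mem hd e, M1_fixed e⟩

end StabAux
namespace StabAux

variable {d : ℕ}

lemma hd2ne (hd : 3 ≤ d) : ((d : ℝ) - 2) ≠ 0 := by
  have h3 : (3 : ℝ) ≤ (d : ℝ) := by exact_mod_cast hd
  exact ne_of_gt (by linarith)

lemma M2_mem (hd : 3 ≤ d) (e : Fin d) :
    (Matrix.of fun i j : Fin d => if i = j then (0 : ℝ)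
      else if i = e ∨ j = e then 1 else -2 / ((d : ℝ) - 2)) ∈ Sd2 d := by
  have hne := hd2ne hd
  refine ⟨fun i => if i = e then ((d : ℝ) - 1) / ((d : ℝ) - 2) else -1 / ((d : ℝ) - 2),
    ?_, fun i => if_pos rfl, ?_⟩
  · rw [← Finset.add_sum_erase _ _ (Finset.mem_univ e), if_pos rfl]
    rw [Finset.sum_congr rfl (fun k hk => if_neg (Finset.ne_of_mem_erase hk)),
      Finset.sum_const, Finset.card_erase_of_mem (Finset.mem_univ e),
      Finset.card_univ, Fintype.card_fin, nsmul_eq_mul, castd hd]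
    field_simp
    ring
  · intro i j hij
    rw [Matrix.of_apply, if_neg hij]
    by_cases hie : i = e
    · have hje : j ≠ e := fun h => hij (hie.trans h.symm)
      rw [if_pos (Or.inl hie)]
      simp only [hie, hje, if_true, ite_true, ite_false, if_neg hje, if_pos rfl]
      field_simp
      ring
    · by_cases hje : j = e
      · rw [if_pos (Or.inr hje)]
        simp only [hie, hje, if_neg hie, if_pos rfl, if_true, if_false]
        field_simp
        ring
      · rw [if_neg (by tauto)]
        simp only [if_neg hie, if_neg hje]
        field_simp
        ring
lemma M2_fixed (e : Fin d) :
    (Matrix.of fun i j : Fin d => if i = j then (0 : ℝ)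
      else if i = e ∨ j = e then 1 else -2 / ((d : ℝ) - 2)) ∈
      fixedSpace {σ : Equiv.Perm (Fin d) | σ e = e} := by
  apply pattern_mem_fixed
  intro i j i' j' h1 h2 h3
  simp only [Matrix.of_apply, h1, h2, h3]

lemma part2 (hd : 3 ≤ d) (e : Fin d) :
    Sd2 d ⊓ fixedSpace {σ : Equiv.Perm (Fin d) | σ e = e} =
      Submodule.span ℝ {Matrix.of fun i j : Fin d => if i = j then (0 : ℝ)
        else if i = e ∨ j = e then 1 else -2 / ((d : ℝ) - 2)} := by
  have hne := hd2ne hd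
  apply le_antisymm
  · rintro W ⟨⟨x, hx0, hxd, hx⟩, hF⟩
    haveI := nontriv hd
    obtain ⟨z, hz⟩ := exists_ne e
    have key := fun i (hi : i ≠ e) => fixed_eq e hF hi hz
    have hxz : ∀ i, i ≠ e → x i = x z := by
      intro i hi
      have h1 := (key i hi).1
      rw [hx i e hi, hx z e hz] at h1
      linarith
    have hxe : x e = -((d : ℝ) - 1) * x z := by
      rw [← Finset.add_sum_erase _ _ (Finset.mem_univ e)] at hx0
      rw [Finset.sum_congr rfl (fun k hk => hxz k (Finset.ne_of_mem_erase hk)),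
        Finset.sum_const, Finset.card_erase_of_mem (Finset.mem_univ e),
        Finset.card_univ, Fintype.card_fin, nsmul_eq_mul, castd hd] at hx0
      linarith
    rw [Submodule.mem_span_singleton]
    refine ⟨x z + x e, ?_⟩
    ext i j
    rw [Matrix.smul_apply, smul_eq_mul, Matrix.of_apply]
    by_cases hij : i = j
    · rw [if_pos hij, hij, hxd j]
      ring
    · rw [if_neg hij, hx i j hij]
      by_cases hie : i = e
      · have hje : j ≠ e := fun h => hij (hie.trans h.symm)
        rw [if_pos (Or.inl hie), hie, hxz j hje]
        ring
      · by_cases hje : j = e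
        · rw [if_pos (Or.inr hje), hje, hxz i hie]
          ring
        · rw [if_neg (by tauto), hxz i hie, hxz j hje, hxe]
          field_simp
          ring
  · rw [Submodule.span_le, Set.singleton_subset_iff]
    exact ⟨M2_mem hd e, M2_fixed e⟩

end StabAux
namespace StabAux

variable {d : ℕ}

lemma M3_mem (e : Fin d) :
    (Matrix.of fun i j : Fin d =>
      if i = e ∧ j ≠ e then (1 : ℝ) else if j = e ∧ i ≠ e then -1 else 0) ∈ Ad1 d := by
  refine ⟨fun i => if i = e then 1 else 0, fun i j => ?_⟩
  rw [Matrix.of_apply]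
  by_cases hie : i = e <;> by_cases hje : j = e <;>
    simp [hie, hje]

lemma M3_fixed (e : Fin d) :
    (Matrix.of fun i j : Fin d =>
      if i = e ∧ j ≠ e then (1 : ℝ) else if j = e ∧ i ≠ e then -1 else 0) ∈
      fixedSpace {σ : Equiv.Perm (Fin d) | σ e = e} := by
  apply pattern_mem_fixed
  intro i j i' j' h1 h2 h3
  simp only [Matrix.of_apply, h1, h2, ne_eq]

lemma part3 (hd : 3 ≤ d) (e : Fin d) :
    Ad1 d ⊓ fixedSpace {σ : Equiv.Perm (Fin d) | σ e = e} =
      Submodule.span ℝ {Matrix.of fun i j : Fin d =>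
        if i = e ∧ j ≠ e then (1 : ℝ) else if j = e ∧ i ≠ e then -1 else 0} := by
  apply le_antisymm
  · rintro W ⟨⟨y, hy⟩, hF⟩
    haveI := nontriv hd
    obtain ⟨z, hz⟩ := exists_ne e
    have key := fun i (hi : i ≠ e) => fixed_eq e hF hi hz
    have hyz : ∀ i, i ≠ e → y i = y z := by
      intro i hi
      have h1 := (key i hi).1
      rw [hy i e, hy z e] at h1
      linarith
    rw [Submodule.mem_span_singleton]
    refine ⟨y e - y z, ?_⟩
    ext i j
    rw [Matrix.smul_apply, smul_eq_mul, Matrix.of_apply, hy i j]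
    by_cases hie : i = e <;> by_cases hje : j = e
    · simp [hie, hje]
    · rw [if_pos (⟨hie, hje⟩ : i = e ∧ j ≠ e), hyz j hje, hie]
      ring
    · have h1 : ¬(i = e ∧ j ≠ e) := by tauto
      rw [if_neg h1, if_pos (⟨hje, hie⟩ : j = e ∧ i ≠ e), hyz i hie, hje]
      ring
    · have h1 : ¬(i = e ∧ j ≠ e) := by tauto
      have h2 : ¬(j = e ∧ i ≠ e) := by tauto
      rw [if_neg h1, if_neg h2, hyz i hie, hyz j hje]
      ring
  · rw [Submodule.span_le, Set.singleton_subset_iff]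
    exact ⟨M3_mem e, M3_fixed e⟩

end StabAux
namespace StabAux

variable {d : ℕ}

lemma part4 (hd : 3 ≤ d) (e : Fin d) :
    Module.finrank ℝ
      ↥((Dd2 d ⊔ Sd2 d ⊔ Ad1 d) ⊓
        fixedSpace {σ : Equiv.Perm (Fin d) | σ e = e}) = 3 := by
  have hne := hd2ne hd
  set v : Fin 3 → Matrix (Fin d) (Fin d) ℝ :=
    ![Matrix.diagonal fun i : Fin d => if i = e then (d : ℝ) - 1 else -1,
      Matrix.of fun i j : Fin d => if i = j then (0 : ℝ)
        else if i = e ∨ j = e then 1 else -2 / ((d : ℝ) - 2),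
      Matrix.of fun i j : Fin d =>
        if i = e ∧ j ≠ e then (1 : ℝ) else if j = e ∧ i ≠ e then -1 else 0] with hv
  haveI := nontriv hd
  obtain ⟨z, hz⟩ := exists_ne e
  have hspan : (Dd2 d ⊔ Sd2 d ⊔ Ad1 d) ⊓ fixedSpace {σ : Equiv.Perm (Fin d) | σ e = e}
      = Submodule.span ℝ (Set.range v) := by
    apply le_antisymm
    · rintro W ⟨hW1, hF⟩
      obtain ⟨BC, hBC, E, hE, rfl⟩ := Submodule.mem_sup.mp hW1
      obtain ⟨B, hB, C, hC, rfl⟩ := Submodule.mem_sup.mp hBC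
      obtain ⟨hBd, hBt⟩ := hB
      obtain ⟨x, hx0, hxd, hx⟩ := hC
      obtain ⟨y, hy⟩ := hE
      have key := fun i (hi : i ≠ e) => fixed_eq e hF hi hz
      have hWapp : ∀ i j, (B + C + E) i j = B i j + C i j + E i j := fun i j => rfl
      have hxyz : ∀ i, i ≠ e → x i = x z ∧ y i = y z := by
        intro i hi
        have h1 := (key i hi).1
        have h2 := (key i hi).2.1
        rw [hWapp, hWapp, hBd i e hi, hBd z e hz, hx i e hi, hx z e hz,
          hy i e, hy z e] at h1
        rw [hWapp, hWapp, hBd e i (Ne.symm hi), hBd e z (Ne.symm hz),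
          hx e i (Ne.symm hi), hx e z (Ne.symm hz), hy e i, hy e z] at h2
        constructor <;> linarith
      have hxe : x e = -((d : ℝ) - 1) * x z := by
        rw [← Finset.add_sum_erase _ _ (Finset.mem_univ e)] at hx0
        rw [Finset.sum_congr rfl
            (fun k hk => ((hxyz k (Finset.ne_of_mem_erase hk)).1)),
          Finset.sum_const, Finset.card_erase_of_mem (Finset.mem_univ e),
          Finset.card_univ, Fintype.card_fin, nsmul_eq_mul, castd hd] at hx0
        linarith
      have hBzz : ∀ i, i ≠ e → B i i = B z z := by
        intro i hi
        have h3 := (key i hi).2.2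
        rw [hWapp, hWapp, hxd i, hxd z, hy i i, hy z z] at h3
        linarith
      have hBee : B e e = -((d : ℝ) - 1) * B z z := by
        rw [← Finset.add_sum_erase _ _ (Finset.mem_univ e)] at hBt
        rw [Finset.sum_congr rfl
            (fun k hk => hBzz k (Finset.ne_of_mem_erase hk)),
          Finset.sum_const, Finset.card_erase_of_mem (Finset.mem_univ e),
          Finset.card_univ, Fintype.card_fin, nsmul_eq_mul, castd hd] at hBt
        linarith
      rw [Submodule.mem_span_range_iff_exists_fun]
      refine ⟨![-(B z z), x z + x e, y e - y z], ?_⟩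
      rw [Fin.sum_univ_three]
      ext i j
      simp only [hv, Matrix.cons_val_zero, Matrix.cons_val_one, Matrix.head_cons,
        Matrix.cons_val_two, Matrix.tail_cons, Matrix.add_apply, Matrix.smul_apply,
        smul_eq_mul, Matrix.of_apply, hWapp]
      by_cases hie : i = e <;> by_cases hje : j = e
      · rw [hie, hje, Matrix.diagonal_apply_eq, if_pos rfl, if_pos rfl,
          if_neg (by tauto), if_neg (by tauto), hxd e, hy e e, hBee]
        ring
      · rw [hie]
        have hej : e ≠ j := fun h => hje h.symm
        rw [Matrix.diagonal_apply_ne _ hej, if_neg hej, if_pos (Or.inl rfl),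
          if_pos (⟨rfl, hje⟩ : e = e ∧ j ≠ e), hBd e j hej, hx e j hej,
          hy e j, (hxyz j hje).1, (hxyz j hje).2]
        ring
      · rw [hje, Matrix.diagonal_apply_ne _ hie, if_neg hie, if_pos (Or.inr rfl),
          if_neg (by tauto), if_pos (⟨rfl, hie⟩ : e = e ∧ i ≠ e),
          hBd i e hie, hx i e hie, hy i e, (hxyz i hie).1, (hxyz i hie).2]
        ring
      · by_cases hij : i = j
        · rw [hij, Matrix.diagonal_apply_eq, if_neg hje, if_pos rfl,
            if_neg (by tauto), if_neg (by tauto), hxd j, hy j j, hBzz j hje]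
          ring
        · rw [Matrix.diagonal_apply_ne _ hij, if_neg hij, if_neg (by tauto),
            if_neg (by tauto), if_neg (by tauto), hBd i j hij, hx i j hij,
            hy i j, (hxyz i hie).1, (hxyz i hie).2, (hxyz j hje).1,
            (hxyz j hje).2, hxe]
          field_simp
          ring
    · rw [Submodule.span_le, Set.range_subset_iff]
      intro k
      fin_cases k
      · exact ⟨Submodule.mem_sup_left (Submodule.mem_sup_left (M1_mem hd e)),
          M1_fixed e⟩
      · exact ⟨Submodule.mem_sup_left (Submodule.mem_sup_right (M2_mem hd e)),
          M2_fixed e⟩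
      · exact ⟨Submodule.mem_sup_right (M3_mem e), M3_fixed e⟩
  have hind : LinearIndependent ℝ v := by
    rw [Fintype.linearIndependent_iff]
    intro g hg
    rw [Fin.sum_univ_three] at hg
    have h := fun i j =>
      congrFun (congrFun (congrArg (fun M : Matrix (Fin d) (Fin d) ℝ => (M : Fin d → Fin d → ℝ)) hg) i) j
    have h1 := h z z
    have h2 := h z e
    have h3 := h e z
    simp only [hv, Matrix.cons_val_zero, Matrix.cons_val_one, Matrix.head_cons,
      Matrix.cons_val_two, Matrix.tail_cons, Matrix.add_apply, Matrix.smul_apply,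
      smul_eq_mul, Matrix.of_apply, Matrix.zero_apply, Matrix.diagonal_apply] at h1 h2 h3
    simp [hz, Ne.symm hz] at h1 h2 h3
    intro k
    fin_cases k
    · exact h1
    · show g 1 = 0; linarith
    · show g 2 = 0; linarith
  rw [hspan, finrank_span_eq_card hind]
  simp

end StabAux
namespace StabAux

variable {d : ℕ}

lemma rank1 (hd : 3 ≤ d) (e : Fin d) :
    Module.finrank ℝ
      ↥(Dd2 d ⊓ fixedSpace {σ : Equiv.Perm (Fin d) | σ e = e}) = 1 := by
  rw [part1 hd e]
  apply finrank_span_singleton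
  intro h
  have h2 := Matrix.ext_iff.mpr h e e
  rw [Matrix.diagonal_apply_eq, if_pos rfl, Matrix.zero_apply] at h2
  have h3 : (3 : ℝ) ≤ (d : ℝ) := by exact_mod_cast hd
  linarith

lemma rank2 (hd : 3 ≤ d) (e : Fin d) :
    Module.finrank ℝ
      ↥(Sd2 d ⊓ fixedSpace {σ : Equiv.Perm (Fin d) | σ e = e}) = 1 := by
  rw [part2 hd e]
  apply finrank_span_singleton
  intro h
  haveI := nontriv hd
  obtain ⟨z, hz⟩ := exists_ne e
  have h2 := Matrix.ext_iff.mpr h z e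
  rw [Matrix.of_apply, if_neg hz, if_pos (Or.inr rfl), Matrix.zero_apply] at h2
  exact one_ne_zero h2

lemma rank3 (hd : 3 ≤ d) (e : Fin d) :
    Module.finrank ℝ
      ↥(Ad1 d ⊓ fixedSpace {σ : Equiv.Perm (Fin d) | σ e = e}) = 1 := by
  rw [part3 hd e]
  apply finrank_span_singleton
  intro h
  haveI := nontriv hd
  obtain ⟨z, hz⟩ := exists_ne e
  have h2 := Matrix.ext_iff.mpr h e z
  rw [Matrix.of_apply, if_pos (⟨rfl, hz⟩ : e = e ∧ z ≠ e), Matrix.zero_apply] at h2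
  exact one_ne_zero h2

end StabAux


/-- for `d ≥ 3` and `G = S_{d−1} × S_1` (permutations fixing the last
index), each of `𝔻_{d,2} ∩ M(d,d)^G`, `𝕊_{d,2} ∩ M(d,d)^G`, `𝔸_{d,1} ∩ M(d,d)^G` is
the one-dimensional span of an explicit matrix, and consequently `V_s ∩ M(d,d)^G` is
three-dimensional. -/
theorem Vs_inter_fixed_stabilizer (d : ℕ) (hd : 3 ≤ d) :
    Dd2 d ⊓ fixedSpace {σ : Equiv.Perm (Fin d) | σ ⟨d - 1, by omega⟩ = ⟨d - 1, by omega⟩} =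
      Submodule.span ℝ
        {Matrix.diagonal fun i : Fin d => if i = ⟨d - 1, by omega⟩ then (d : ℝ) - 1 else -1} ∧
    Module.finrank ℝ
      ↥(Dd2 d ⊓ fixedSpace {σ : Equiv.Perm (Fin d) | σ ⟨d - 1, by omega⟩ = ⟨d - 1, by omega⟩}) = 1 ∧
    Sd2 d ⊓ fixedSpace {σ : Equiv.Perm (Fin d) | σ ⟨d - 1, by omega⟩ = ⟨d - 1, by omega⟩} =
      Submodule.span ℝ
        {Matrix.of fun i j : Fin d => if i = j then (0 : ℝ)
          else if i = ⟨d - 1, by omega⟩ ∨ j = ⟨d - 1, by omega⟩ then 1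
          else -2 / ((d : ℝ) - 2)} ∧
    Module.finrank ℝ
      ↥(Sd2 d ⊓ fixedSpace {σ : Equiv.Perm (Fin d) | σ ⟨d - 1, by omega⟩ = ⟨d - 1, by omega⟩}) = 1 ∧
    Ad1 d ⊓ fixedSpace {σ : Equiv.Perm (Fin d) | σ ⟨d - 1, by omega⟩ = ⟨d - 1, by omega⟩} =
      Submodule.span ℝ
        {Matrix.of fun i j : Fin d =>
          if i = ⟨d - 1, by omega⟩ ∧ j ≠ ⟨d - 1, by omega⟩ then (1 : ℝ)
          else if j = ⟨d - 1, by omega⟩ ∧ i ≠ ⟨d - 1, by omega⟩ then -1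
          else 0} ∧
    Module.finrank ℝ
      ↥(Ad1 d ⊓ fixedSpace {σ : Equiv.Perm (Fin d) | σ ⟨d - 1, by omega⟩ = ⟨d - 1, by omega⟩}) = 1 ∧
    Module.finrank ℝ
      ↥((Dd2 d ⊔ Sd2 d ⊔ Ad1 d) ⊓
        fixedSpace {σ : Equiv.Perm (Fin d) | σ ⟨d - 1, by omega⟩ = ⟨d - 1, by omega⟩}) = 3 := by
  exact ⟨StabAux.part1 hd _, StabAux.rank1 hd _, StabAux.part2 hd _, StabAux.rank2 hd _,
    StabAux.part3 hd _, StabAux.rank3 hd _, StabAux.part4 hd _⟩
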